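/- Let κ be a regular uncountable cardinal. For every bounded operator x on ℓ²(κ) there exists a club C in κ such that x ∈ D[C], i.e., for every α ∈ C the subspace ℓ²(α) is invariant under both x and x*. -/

import Mathlib

noncomputable section

open Set

/-- The Hilbert space ℓ²(o): square-summable families indexed by the ordinals below `o`. -/
abbrev L2 (o : Ordinal) : Type := ↥(lp (fun _ : o.ToType => ℂ) 2)

/-- Bounded linear operators on ℓ²(o). -/
abbrev Bd (o : Ordinal) : Type := L2 o →L[ℂ] L2 o

/-- The ordinal (below `o`) corresponding to an index `i` of ℓ²(o). -/
def ordOf {o : Ordinal} (i : o.ToType) : Ordinal := ((Ordinal.ToType.mk (o := o)).symm i : Ordinal)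

/-- `InvOn o S x` : the closed subspace of ℓ²(o) of functions supported on `S`
is an invariant subspace of `x`. -/
def InvOn (o : Ordinal) (S : Set Ordinal) (x : Bd o) : Prop :=
  ∀ f : L2 o, (∀ i : o.ToType, ordOf i ∉ S → f i = 0) →
    ∀ i : o.ToType, ordOf i ∉ S → x f i = 0

/-- `Dclub o C` (the algebra `D[C]`) is the set of bounded operators `x` on ℓ²(o) such
that for every `α ∈ C`, ℓ²(α) is an invariant subspace of both `x` and its adjoint. -/
def Dclub (o : Ordinal) (C : Set Ordinal) : Set (Bd o) :=
  {x | ∀ α ∈ C, InvOn o (Set.Iio α) x ∧ InvOn o (Set.Iio α) (star x)}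

/-- A club in (the ordinal) `o`: a closed unbounded subset of `o`. -/
def IsClubOrd (o : Ordinal) (C : Set Ordinal) : Prop :=
  C ⊆ Set.Iio o ∧
  (∀ s ⊆ C, s.Nonempty → sSup s < o → sSup s ∈ C) ∧
  (∀ α < o, ∃ β ∈ C, α < β)

/-- The least element of `C` strictly above `α`. -/
def clubSucc (C : Set Ordinal) (α : Ordinal) : Ordinal :=
  sInf {β | β ∈ C ∧ α < β}

/-- `memJ κ x` : the (Hilbert space) dimension of the range of `x` is `< κ`;
equivalently (for uncountable κ), the range of `x` is contained in the closure
of a set of cardinality `< κ`. -/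
def memJ (κ : Cardinal) {o : Ordinal} (x : Bd o) : Prop :=
  ∃ D : Set (L2 o), Cardinal.mk D < κ ∧ Set.range ⇑x ⊆ closure D

instance : Fact (1 ≤ (2:ENNReal)) := ⟨one_le_two⟩

lemma ordOf_lt {o : Ordinal} (i : o.ToType) : ordOf i < o := ((Ordinal.ToType.mk (o := o)).symm i).2

lemma ordOf_inj {o : Ordinal} : Function.Injective (@ordOf o) := by
  intro a b h
  have := (Ordinal.ToType.mk (o := o)).symm.injective (Subtype.ext h)
  exact this

/-- coordinate evaluation as a continuous linear map -/
def evalCLM (o : Ordinal) (j : o.ToType) : L2 o →L[ℂ] ℂ :=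
  LinearMap.mkContinuous
    { toFun := fun f => f j
      map_add' := fun f g => by simp [lp.coeFn_add]
      map_smul' := fun c f => by simp [lp.coeFn_smul] }
    1 (fun f => by rw [one_mul]; exact lp.norm_apply_le_norm two_ne_zero f j)

@[simp] lemma evalCLM_apply {o : Ordinal} (j : o.ToType) (f : L2 o) : evalCLM o j f = f j := rfl

lemma single_eq_smul {o : Ordinal} (i : o.ToType) (c : ℂ) :
    lp.single 2 i c = c • lp.single (E := fun _ : o.ToType => ℂ) 2 i 1 := by
  have := lp.single_smul (E := fun _ : o.ToType => ℂ) 2 i c (1:ℂ)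
  rw [smul_eq_mul, mul_one] at this; exact this

/-- If `y` maps basis vectors below `α` into the span of coordinates below `α`,
then the subspace supported below `α` is invariant. -/
lemma invOn_of_basis {o : Ordinal} (y : Bd o) (α : Ordinal)
    (hy : ∀ i j : o.ToType, ordOf i < α → ¬ ordOf j < α → y (lp.single 2 i 1) j = 0) :
    InvOn o (Set.Iio α) y := by
  intro f hf j hj
  simp only [Set.mem_Iio] at hj
  have hs : HasSum (fun i : o.ToType => lp.single 2 i (f i)) f :=
    lp.hasSum_single (by norm_num) f
  have hs2 : HasSum (fun i : o.ToType => (evalCLM o j) (y (lp.single 2 i (f i))))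
      ((evalCLM o j) (y f)) := ((evalCLM o j).comp y).hasSum hs
  have hzero : ∀ i : o.ToType, y (lp.single 2 i (f i)) j = 0 := by
    intro i
    by_cases hi : ordOf i < α
    · rw [single_eq_smul, map_smul, lp.coeFn_smul, Pi.smul_apply, hy i j hi hj, smul_zero]
    · rw [hf i (by simpa using hi), single_eq_smul]
      simp
  have h0 : HasSum (fun i : o.ToType => y (lp.single 2 i (f i)) j) (y f j) := hs2
  rw [funext hzero] at h0
  exact h0.unique hasSum_zero

lemma support_countable {o : Ordinal} (f : L2 o) : {i : o.ToType | f i ≠ 0}.Countable := by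
  have h : Summable (fun i : o.ToType => ‖f i‖ ^ (2:ENNReal).toReal) :=
    (lp.hasSum_norm (by norm_num) f).summable
  refine h.countable_support.mono ?_
  intro i hi
  have hi' : f i ≠ 0 := hi
  simp only [Function.mem_support]
  intro h0
  exact hi' (norm_eq_zero.mp
    ((Real.rpow_eq_zero (norm_nonneg _) (by norm_num)).mp h0))

def suppSet (o : Ordinal) (x : Bd o) (i : o.ToType) : Set o.ToType :=
  {j | x (lp.single 2 i 1) j ≠ 0} ∪ {j | (star x) (lp.single 2 i 1) j ≠ 0}

lemma suppSet_countable (o : Ordinal) (x : Bd o) (i : o.ToType) : (suppSet o x i).Countable :=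
  (support_countable (x (lp.single 2 i 1))).union (support_countable ((star x) (lp.single 2 i 1)))

def sBound (o : Ordinal) (x : Bd o) (i : o.ToType) : Ordinal :=
  ⨆ j : suppSet o x i, (ordOf j.1 + 1)

def gFun (o : Ordinal) (x : Bd o) (β : Ordinal) : Ordinal :=
  (β + 1) ⊔ ⨆ i : {i : o.ToType // ordOf i ≤ β}, sBound o x i.1

lemma sBound_lt (κ : Cardinal.{0}) (hreg : κ.IsRegular) (hunc : Cardinal.aleph0 < κ)
    (x : Bd κ.ord) (i : κ.ord.ToType) : sBound κ.ord x i < κ.ord := by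
  have holim : Order.IsSuccLimit κ.ord := Cardinal.isSuccLimit_ord hreg.aleph0_le
  have : Countable (suppSet κ.ord x i) := (suppSet_countable κ.ord x i).to_subtype
  refine Cardinal.iSup_lt_ord_of_isRegular hreg (lt_of_le_of_lt Cardinal.mk_le_aleph0 hunc) ?_
  intro j
  rw [Ordinal.add_one_eq_succ]
  exact holim.succ_lt (ordOf_lt _)

lemma sBound_mem {o : Ordinal} {x : Bd o} {i j : o.ToType} (hj : j ∈ suppSet o x i) :
    ordOf j < sBound o x i := by
  have h1 : ordOf j + 1 ≤ sBound o x i :=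
    le_ciSup (Ordinal.bddAbove_range _) (⟨j, hj⟩ : suppSet o x i)
  refine lt_of_lt_of_le ?_ h1
  rw [Ordinal.add_one_eq_succ]; exact Order.lt_succ _

lemma lt_gFun (o : Ordinal) (x : Bd o) (β : Ordinal) : β < gFun o x β := by
  refine lt_of_lt_of_le ?_ le_sup_left
  rw [Ordinal.add_one_eq_succ]; exact Order.lt_succ _

lemma sBound_le_gFun {o : Ordinal} (x : Bd o) {i : o.ToType} {β : Ordinal} (h : ordOf i ≤ β) :
    sBound o x i ≤ gFun o x β :=
  le_trans (le_ciSup (Ordinal.bddAbove_range _) (⟨i, h⟩ : {i : o.ToType // ordOf i ≤ β}))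
    le_sup_right

lemma gFun_mono (o : Ordinal) (x : Bd o) : Monotone (gFun o x) := by
  intro β γ h
  refine sup_le (le_trans (add_le_add h le_rfl) le_sup_left) ?_
  exact ciSup_le' fun i => sBound_le_gFun x (le_trans i.2 h)

lemma gFun_lt (κ : Cardinal.{0}) (hreg : κ.IsRegular) (hunc : Cardinal.aleph0 < κ)
    (x : Bd κ.ord) {β : Ordinal} (hβ : β < κ.ord) : gFun κ.ord x β < κ.ord := by
  have holim : Order.IsSuccLimit κ.ord := Cardinal.isSuccLimit_ord hreg.aleph0_le
  have hβ1 : β + 1 < κ.ord := by rw [Ordinal.add_one_eq_succ]; exact holim.succ_lt hβ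
  refine sup_lt_iff.mpr ⟨hβ1, ?_⟩
  refine Cardinal.iSup_lt_ord_of_isRegular hreg ?_ fun i => sBound_lt κ hreg hunc x i.1
  have hinj : Function.Injective
      (fun i : {i : κ.ord.ToType // ordOf i ≤ β} =>
        (Ordinal.ToType.mk (o := β + 1)) ⟨ordOf i.1, by
          rw [Set.mem_Iio, Ordinal.add_one_eq_succ]; exact Order.lt_succ_of_le i.2⟩) := by
    intro a b hab
    have h2 := (Ordinal.ToType.mk (o := β + 1)).injective hab
    exact Subtype.ext (ordOf_inj (by simpa using congrArg Subtype.val h2))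
  calc Cardinal.mk {i : κ.ord.ToType // ordOf i ≤ β} ≤ Cardinal.mk (β + 1).ToType :=
        Cardinal.mk_le_of_injective hinj
    _ = (β + 1).card := Cardinal.mk_toType _
    _ < κ := Cardinal.lt_ord.mp hβ1

/-- **Lemma (covering).** For κ regular uncountable, every bounded operator on ℓ²(κ)
belongs to `D[C]` for some club `C` in κ. -/
theorem exists_club_mem_Dclub (κ : Cardinal.{0}) (hreg : κ.IsRegular)
    (hunc : Cardinal.aleph0 < κ) (x : Bd κ.ord) :
    ∃ C : Set Ordinal, IsClubOrd κ.ord C ∧ x ∈ Dclub κ.ord C := by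
  have holim : Order.IsSuccLimit κ.ord := Cardinal.isSuccLimit_ord hreg.aleph0_le
  refine ⟨{α | α < κ.ord ∧ ∀ β < α, gFun κ.ord x β ≤ α}, ⟨fun α hα => hα.1, ?_, ?_⟩, ?_⟩
  · -- closed
    intro t ht hne hlt
    refine ⟨hlt, fun β hβ => ?_⟩
    obtain ⟨a, hat, hba⟩ := exists_lt_of_lt_csSup hne hβ
    exact le_trans ((ht hat).2 β hba)
      (le_csSup ⟨κ.ord, fun z hz => ((ht hz).1).le⟩ hat)
  · -- unbounded
    intro α hα
    obtain ⟨a, ha0, hasucc⟩ :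
        ∃ a : ℕ → Ordinal, a 0 = α + 1 ∧ ∀ n, a (n + 1) = gFun κ.ord x (a n) :=
      ⟨fun n => Nat.rec (α + 1) (fun _ ih => gFun κ.ord x ih) n, rfl, fun _ => rfl⟩
    have ha_lt : ∀ n, a n < κ.ord := by
      intro n
      induction n with
      | zero =>
        rw [ha0, Ordinal.add_one_eq_succ]; exact holim.succ_lt hα
      | succ n ih =>
        rw [hasucc]; exact gFun_lt κ hreg hunc x ih
    have hbdd := Ordinal.bddAbove_range a
    have hδ : (⨆ n, a n) < κ.ord := by
      refine Cardinal.iSup_lt_ord_of_isRegular hreg ?_ ha_lt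
      simpa using hunc
    refine ⟨⨆ n, a n, ⟨hδ, fun β hβ => ?_⟩, ?_⟩
    · obtain ⟨n, hn⟩ := (lt_ciSup_iff hbdd).mp hβ
      calc gFun κ.ord x β ≤ gFun κ.ord x (a n) := gFun_mono κ.ord x hn.le
        _ = a (n + 1) := (hasucc n).symm
        _ ≤ ⨆ n, a n := le_ciSup hbdd (n + 1)
    · refine lt_of_lt_of_le ?_ (le_ciSup hbdd 0)
      rw [ha0, Ordinal.add_one_eq_succ]; exact Order.lt_succ _
  · -- x ∈ Dclub
    intro α hα
    have key : ∀ i j : κ.ord.ToType, ordOf i < α → ¬ ordOf j < α → j ∉ suppSet κ.ord x i := by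
      intro i j hi hj hmem
      exact hj (lt_of_lt_of_le (sBound_mem hmem)
        (le_trans (sBound_le_gFun x le_rfl) (hα.2 (ordOf i) hi)))
    constructor
    · refine invOn_of_basis x α fun i j hi hj => ?_
      by_contra h0
      exact key i j hi hj (Or.inl h0)
    · refine invOn_of_basis (star x) α fun i j hi hj => ?_
      by_contra h0
      exact key i j hi hj (Or.inr h0)
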